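/- For every odd prime power q and each α ∈ {1, −1}, the number of monic irreducible polynomials R ∈ F_q[T] of degree 2 with χ_q(R(0)) = α equals (1/4)·q² − ((1 + α)/4)·q + α/4. -/

import Mathlib

open Polynomial

open Finset

section QCHelpers

variable {F : Type} [Field F] [Fintype F] [DecidableEq F]

private lemma qc_sum_split (f : F → F) :
    ∑ b : F, quadraticChar F (f b)
      = ((univ.filter fun b => quadraticChar F (f b) = 1).card : ℤ)
        - ((univ.filter fun b => quadraticChar F (f b) = -1).card : ℤ) := by
  have h : ∀ b : F, quadraticChar F (f b)
      = (if quadraticChar F (f b) = 1 then (1:ℤ) else 0)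
        - (if quadraticChar F (f b) = -1 then (1:ℤ) else 0) := by
    intro b
    rcases eq_or_ne (f b) 0 with h0 | h0
    · simp [h0]
    · rcases quadraticChar_dichotomy h0 with h1 | h1 <;> rw [h1] <;> norm_num
  rw [Finset.sum_congr rfl fun b _ => h b, Finset.sum_sub_distrib]
  simp

private lemma qc_card_split (f : F → F) :
    ((univ.filter fun b => quadraticChar F (f b) = 1).card : ℤ)
      + ((univ.filter fun b => quadraticChar F (f b) = -1).card : ℤ)
      + ((univ.filter fun b => f b = 0).card : ℤ)
      = Fintype.card F := by
  have h : ∀ b : F, (1:ℤ)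
      = (if quadraticChar F (f b) = 1 then (1:ℤ) else 0)
        + (if quadraticChar F (f b) = -1 then (1:ℤ) else 0)
        + (if f b = 0 then (1:ℤ) else 0) := by
    intro b
    rcases eq_or_ne (f b) 0 with h0 | h0
    · simp [h0]
    · rcases quadraticChar_dichotomy h0 with h1 | h1 <;> rw [h1] <;> simp [h0]
  have h2 : ∑ b : F, (1:ℤ) = Fintype.card F := by simp
  rw [Finset.sum_congr rfl fun b _ => h b] at h2
  rw [Finset.sum_add_distrib, Finset.sum_add_distrib] at h2
  simpa using h2

private lemma qc_card_sqrt (hF : ringChar F ≠ 2) (a : F) :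
    (((univ : Finset F).filter fun b : F => b ^ 2 = a).card : ℤ)
      = quadraticChar F a + 1 := by
  have := quadraticChar_card_sqrts hF a
  rwa [Set.toFinset_setOf] at this

private lemma qc_sum_sq_add (hF : ringChar F ≠ 2) {k : F} (hk : k ≠ 0) :
    ∑ b : F, quadraticChar F (b ^ 2 + k) = -1 := by
  have h1 : ∑ b : F, quadraticChar F (b ^ 2 + k)
      = ∑ v : F, (quadraticChar F v + 1) * quadraticChar F (v + k) := by
    rw [← Finset.sum_fiberwise_of_maps_to (fun b _ => mem_univ (b ^ 2))
      (fun b => quadraticChar F (b ^ 2 + k))]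
    refine Finset.sum_congr rfl fun v _ => ?_
    have : ∑ b ∈ univ.filter (fun b : F => b ^ 2 = v), quadraticChar F (b ^ 2 + k)
        = ∑ _b ∈ univ.filter (fun b : F => b ^ 2 = v), quadraticChar F (v + k) := by
      refine Finset.sum_congr rfl fun b hb => ?_
      rw [(Finset.mem_filter.mp hb).2]
    rw [this, Finset.sum_const, nsmul_eq_mul]
    rw [← qc_card_sqrt hF v]
  have h2 : ∑ v : F, quadraticChar F (v + k) = 0 := by
    exact (Fintype.sum_equiv (Equiv.addRight k) (fun v => quadraticChar F (v + k))
      (fun w => quadraticChar F w) fun v => rfl).trans (quadraticChar_sum_zero hF)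
  have h3 : ∑ v : F, quadraticChar F v * quadraticChar F (v + k) = -1 := by
    have e0 : ∑ v : F, quadraticChar F v * quadraticChar F (v + k)
        = ∑ v ∈ univ \ {(0:F)}, quadraticChar F v * quadraticChar F (v + k) := by
      refine (Finset.sum_subset (Finset.sdiff_subset) fun v _ hv => ?_).symm
      have : v = 0 := by simpa using hv
      simp [this]
    rw [e0]
    have e1 : ∑ v ∈ univ \ {(0:F)}, quadraticChar F v * quadraticChar F (v + k)
        = ∑ w ∈ univ \ {(1:F)}, quadraticChar F w := by
      refine Finset.sum_nbij' (fun v => 1 + k * v⁻¹) (fun w => k * (w - 1)⁻¹)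
        ?_ ?_ ?_ ?_ ?_
      · intro v hv
        have hv0 : v ≠ 0 := by simpa using hv
        simp only [mem_sdiff, mem_univ, true_and, mem_singleton]
        intro h
        have : k * v⁻¹ = 0 := by linear_combination h
        rcases mul_eq_zero.mp this with h' | h'
        · exact hk h'
        · exact hv0 (inv_eq_zero.mp h')
      · intro w hw
        have hw1 : w ≠ 1 := by simpa using hw
        simp only [mem_sdiff, mem_univ, true_and, mem_singleton]
        intro h
        rcases mul_eq_zero.mp h with h' | h'
        · exact hk h'
        · exact hw1 (by have := inv_eq_zero.mp h'; linear_combination this)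
      · intro v hv
        have hv0 : v ≠ 0 := by simpa using hv
        field_simp
        rw [add_sub_cancel_left, div_self hk]
      · intro w hw
        have hw1 : w ≠ 1 := by simpa using hw
        have : w - 1 ≠ 0 := sub_ne_zero.mpr hw1
        field_simp
        ring
      · intro v hv
        have hv0 : v ≠ 0 := by simpa using hv
        have hvk : v + k = v * (1 + k * v⁻¹) := by field_simp
        rw [hvk, map_mul, ← mul_assoc, ← map_mul, ← sq, quadraticChar_sq_one' hv0, one_mul]
    rw [e1, Finset.sum_sdiff_eq_sub (Finset.subset_univ _), quadraticChar_sum_zero hF]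
    simp
  have h4 : ∑ v : F, (quadraticChar F v + 1) * quadraticChar F (v + k)
      = ∑ v : F, quadraticChar F v * quadraticChar F (v + k)
        + ∑ v : F, quadraticChar F (v + k) := by
    rw [← Finset.sum_add_distrib]
    exact Finset.sum_congr rfl fun v _ => by ring
  rw [h1, h4, h2, h3]
  norm_num

private lemma qc_irred_iff (hF : ringChar F ≠ 2) (b c : F) :
    Irreducible (X ^ 2 + C b * X + C c : F[X])
      ↔ quadraticChar F (b ^ 2 - 4 * c) = -1 := by
  have h2 : (2 : F) ≠ 0 := Ring.two_ne_zero hF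
  haveI : NeZero (2 : F) := ⟨h2⟩
  have hmon : (X ^ 2 + C b * X + C c : F[X]).Monic := by
    rw [add_assoc]
    refine monic_X_pow_add ?_
    calc degree (C b * X + C c) ≤ 1 := degree_linear_le
    _ < 2 := by norm_num
  have hdeg : (X ^ 2 + C b * X + C c : F[X]).natDegree = 2 := by
    compute_degree!
  have heval : ∀ x : F, eval x (X ^ 2 + C b * X + C c) = 1 * (x * x) + b * x + c := by
    intro x; simp; ring
  rw [hmon.irreducible_iff_roots_eq_zero_of_degree_le_three (by omega) (by omega)]
  rw [quadraticChar_neg_one_iff_not_isSquare]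
  have hne : (X ^ 2 + C b * X + C c : F[X]) ≠ 0 := hmon.ne_zero
  have hroots : (X ^ 2 + C b * X + C c : F[X]).roots = 0
      ↔ ¬ ∃ x : F, eval x (X ^ 2 + C b * X + C c) = 0 := by
    rw [Multiset.eq_zero_iff_forall_notMem]
    push_neg
    constructor
    · intro h x hx
      exact h x (by rw [mem_roots hne]; exact hx)
    · intro h x hx
      exact h x ((mem_roots hne).mp hx)
  rw [hroots]
  have hkey : (∃ x : F, eval x (X ^ 2 + C b * X + C c) = 0) ↔ IsSquare (b ^ 2 - 4 * c) := by
    constructor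
    · rintro ⟨x, hx⟩
      rw [heval] at hx
      have hd := (quadratic_eq_zero_iff_discrim_eq_sq one_ne_zero x).mp hx
      rw [discrim] at hd
      exact ⟨2 * 1 * x + b, by linear_combination hd⟩
    · rintro ⟨s, hs⟩
      obtain ⟨x, hx⟩ := exists_quadratic_eq_zero (a := (1:F)) (b := b) (c := c) one_ne_zero
        ⟨s, by rw [discrim]; linear_combination hs⟩
      exact ⟨x, by rw [heval]; exact hx⟩
  rw [hkey]

private lemma qc_count_b (hF : ringChar F ≠ 2) {c : F} {α : ℤ}
    (hα : α = 1 ∨ α = -1) (hc : quadraticChar F c = α) :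
    2 * ((univ.filter fun b : F => quadraticChar F (b ^ 2 - 4 * c) = -1).card : ℤ)
      = Fintype.card F - α := by
  have h2 : (2 : F) ≠ 0 := Ring.two_ne_zero hF
  have hc0 : c ≠ 0 := by
    rintro rfl
    rw [quadraticChar_zero] at hc
    rcases hα with rfl | rfl <;> simp at hc
  have h4 : (4 : F) ≠ 0 := by
    intro h
    exact h2 (by have : (2:F) * 2 = 0 := by rw [← h]; norm_num
                 rcases mul_eq_zero.mp this with h' | h' <;> exact h')
  have hk : -(4 * c) ≠ 0 := neg_ne_zero.mpr (mul_ne_zero h4 hc0)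
  have hsum := qc_sum_split (fun b : F => b ^ 2 - 4 * c)
  have hsum2 : ∑ b : F, quadraticChar F (b ^ 2 - 4 * c) = -1 := by
    have := qc_sum_sq_add hF hk
    simpa only [← sub_eq_add_neg] using this
  rw [hsum2] at hsum
  have hcards := qc_card_split (fun b : F => b ^ 2 - 4 * c)
  have h0 : ((univ.filter fun b : F => b ^ 2 - 4 * c = 0).card : ℤ) = α + 1 := by
    have he : (univ.filter fun b : F => b ^ 2 - 4 * c = 0)
        = (univ.filter fun b : F => b ^ 2 = 4 * c) := by
      ext b; simp [sub_eq_zero]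
    rw [he, qc_card_sqrt hF]
    have h44 : (4 : F) = 2 ^ 2 := by norm_num
    rw [map_mul, h44, quadraticChar_sq_one' h2, one_mul, hc]
  rw [h0] at hcards
  linarith

private lemma qc_count_c (hF : ringChar F ≠ 2) {α : ℤ} (hα : α = 1 ∨ α = -1) :
    2 * ((univ.filter fun c : F => quadraticChar F c = α).card : ℤ)
      = Fintype.card F - 1 := by
  have hsum := qc_sum_split (fun c : F => c)
  have hz : ∑ c : F, quadraticChar F c = 0 := quadraticChar_sum_zero hF
  rw [hz] at hsum
  have hcards := qc_card_split (fun c : F => c)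
  have h0 : ((univ.filter fun c : F => c = 0).card : ℤ) = 1 := by
    have : (univ.filter fun c : F => c = 0) = {0} := by ext c; simp
    rw [this]; simp
  rw [h0] at hcards
  rcases hα with rfl | rfl
  · linarith
  · linarith

private lemma qc_main_count (hF : ringChar F ≠ 2) {α : ℤ} (hα : α = 1 ∨ α = -1) :
    4 * (((univ : Finset (F × F)).filter fun p : F × F =>
        quadraticChar F (p.1 ^ 2 - 4 * p.2) = -1 ∧ quadraticChar F p.2 = α).card : ℤ)
      = ((Fintype.card F : ℤ) - 1) * ((Fintype.card F : ℤ) - α) := by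
  set A := (univ : Finset (F × F)).filter fun p : F × F =>
      quadraticChar F (p.1 ^ 2 - 4 * p.2) = -1 ∧ quadraticChar F p.2 = α with hA
  have hfib : A.card = ∑ c : F, (A.filter fun p => p.2 = c).card :=
    Finset.card_eq_sum_card_fiberwise fun p _ => mem_univ p.2
  have hfib2 : ∀ c : F, (A.filter fun p => p.2 = c).card
      = if quadraticChar F c = α then
          (univ.filter fun b : F => quadraticChar F (b ^ 2 - 4 * c) = -1).card
        else 0 := by
    intro c
    by_cases hc : quadraticChar F c = α
    · rw [if_pos hc]
      refine Finset.card_nbij' (fun p => p.1) (fun b => (b, c)) ?_ ?_ ?_ ?_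
      · intro p hp
        simp only [hA, Finset.mem_coe, mem_filter, mem_univ, true_and] at hp ⊢
        rcases hp with ⟨⟨hd, _⟩, h2⟩
        rw [← h2]; exact hd
      · intro b hb
        simp only [hA, Finset.mem_coe, mem_filter, mem_univ, true_and] at hb ⊢
        exact ⟨⟨hb, hc⟩, trivial⟩
      · intro p hp
        simp only [hA, Finset.mem_coe, mem_filter] at hp
        exact Prod.ext rfl hp.2.symm
      · intro b _
        rfl
    · rw [if_neg hc]
      rw [Finset.card_eq_zero, Finset.filter_eq_empty_iff]
      intro p hp
      simp only [hA, mem_filter, mem_univ, true_and] at hp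
      intro h2
      exact hc (h2 ▸ hp.2)
  have hsum : (A.card : ℤ) = ∑ c ∈ univ.filter (fun c : F => quadraticChar F c = α),
      ((univ.filter fun b : F => quadraticChar F (b ^ 2 - 4 * c) = -1).card : ℤ) := by
    rw [hfib]
    push_cast
    rw [Finset.sum_congr rfl fun c _ => by rw [hfib2 c]]
    simp only [apply_ite (fun n : ℕ => (n : ℤ)), Nat.cast_zero]
    rw [← Finset.sum_filter]
  have hstep : 2 * (A.card : ℤ)
      = ∑ c ∈ univ.filter (fun c : F => quadraticChar F c = α),
          ((Fintype.card F : ℤ) - α) := by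
    rw [hsum, Finset.mul_sum]
    refine Finset.sum_congr rfl fun c hc => ?_
    exact qc_count_b hF hα (Finset.mem_filter.mp hc).2
  rw [Finset.sum_const, nsmul_eq_mul] at hstep
  have hc2 := qc_count_c (F := F) hF hα
  calc 4 * (A.card : ℤ) = 2 * (2 * (A.card : ℤ)) := by ring
  _ = 2 * (((univ.filter fun c : F => quadraticChar F c = α).card : ℤ)
        * ((Fintype.card F : ℤ) - α)) := by rw [hstep]
  _ = (2 * ((univ.filter fun c : F => quadraticChar F c = α).card : ℤ))
        * ((Fintype.card F : ℤ) - α) := by ring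
  _ = ((Fintype.card F : ℤ) - 1) * ((Fintype.card F : ℤ) - α) := by rw [hc2]

end QCHelpers

/-- For `q` an odd prime power and `α ∈ {1, -1}`, the number of monic
irreducible quadratic polynomials `R ∈ F_q[T]` with `χ_q(R(0)) = α` is
`q²/4 - ((1+α)/4)q + α/4`. -/
theorem count_quadratic_primes (F : Type) [Field F] [Fintype F] [DecidableEq F]
    (hq : Odd (Fintype.card F)) (α : ℤ) (hα : α = 1 ∨ α = -1) :
    (({R : F[X] | R.Monic ∧ Irreducible R ∧ R.natDegree = 2 ∧
        quadraticChar F (R.eval 0) = α}.ncard : ℝ))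
      = (1 / 4) * (Fintype.card F : ℝ) ^ 2 - ((1 + (α : ℝ)) / 4) * (Fintype.card F : ℝ)
          + (α : ℝ) / 4 := by
  have hF : ringChar F ≠ 2 := by
    intro h
    have := FiniteField.even_card_iff_char_two.mp h
    rw [Nat.odd_iff] at hq
    omega
  set A := (univ : Finset (F × F)).filter fun p : F × F =>
      quadraticChar F (p.1 ^ 2 - 4 * p.2) = -1 ∧ quadraticChar F p.2 = α with hA
  have hinj : Function.Injective (fun p : F × F => X ^ 2 + C p.1 * X + C p.2) := by
    intro p q h
    simp only at h
    have h0 : p.2 = q.2 := by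
      have := congrArg (fun P : F[X] => P.coeff 0) h
      simpa [coeff_X_pow] using this
    have h1 : p.1 = q.1 := by
      have := congrArg (fun P : F[X] => P.coeff 1) h
      simpa [coeff_X_pow] using this
    exact Prod.ext h1 h0
  have hmon : ∀ b c : F, (X ^ 2 + C b * X + C c : F[X]).Monic := by
    intro b c
    rw [add_assoc]
    refine monic_X_pow_add ?_
    calc degree (C b * X + C c) ≤ 1 := degree_linear_le
    _ < 2 := by norm_num
  have hdeg : ∀ b c : F, (X ^ 2 + C b * X + C c : F[X]).natDegree = 2 := by
    intro b c; compute_degree!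
  have hset : {R : F[X] | R.Monic ∧ Irreducible R ∧ R.natDegree = 2 ∧
        quadraticChar F (R.eval 0) = α}
      = ↑(A.image fun p : F × F => X ^ 2 + C p.1 * X + C p.2) := by
    ext R
    simp only [Set.mem_setOf_eq, Finset.coe_image, Set.mem_image, Finset.mem_coe,
      hA, Finset.mem_filter, Finset.mem_univ, true_and]
    constructor
    · rintro ⟨hm, hirr, hd, hchi⟩
      have hc2 : R.coeff 2 = 1 := by
        have := hm.coeff_natDegree
        rwa [hd] at this
      have hR : R = X ^ 2 + C (R.coeff 1) * X + C (R.coeff 0) := by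
        ext n
        rcases n with _ | _ | _ | n
        · simp [coeff_X_pow]
        · simp [coeff_X_pow]
        · simp [coeff_X_pow, hc2]
        · rw [coeff_eq_zero_of_natDegree_lt (by omega)]
          simp [coeff_X_pow]
      refine ⟨(R.coeff 1, R.coeff 0), ⟨?_, ?_⟩, hR.symm⟩
      · rw [← qc_irred_iff hF]
        rw [← hR]
        exact hirr
      · rw [show R.coeff 0 = R.eval 0 from coeff_zero_eq_eval_zero R]
        exact hchi
    · rintro ⟨⟨b, c⟩, ⟨hdisc, hchi⟩, rfl⟩
      refine ⟨hmon b c, (qc_irred_iff hF b c).mpr hdisc, hdeg b c, ?_⟩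
      simpa using hchi
  rw [hset, Set.ncard_coe_finset, Finset.card_image_of_injective _ hinj]
  have hz := qc_main_count (F := F) hF hα
  have hzr : 4 * ((A.card : ℝ)) = ((Fintype.card F : ℝ) - 1) * ((Fintype.card F : ℝ) - α) := by
    exact_mod_cast congrArg (fun z : ℤ => (z : ℝ)) hz
  linear_combination hzr / 4
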